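/- arXiv:0904.2912 — 2 statements merged into one kernel-verified Lean document; each statement's English description precedes it below -/
import Mathlib

section
/- Let λ = (λ_0, …, λ_k) ∈ ℝ^{k+1} and set δ(λ) = min_{i<j} |λ_i − λ_j|. For x in the standard k-simplex, let dv(x) denote the Euclidean distance from x to the nearest vertex e_i of the simplex. Then δ(λ)² · dv(x)² / 2 ≤ ∑_{0 ≤ i < j ≤ k} x_i x_j (λ_i − λ_j)². -/
/-- With `δ(λ) = min_{i<j} |λ_i − λ_j|` and `dv(x)` the Euclidean distance
from `x` in the standard `k`-simplex to the nearest vertex,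
`δ(λ)² · dv(x)² / 2 ≤ ∑_{i<j} x_i x_j (λ_i − λ_j)²`. Here `δ` is quantified as any
nonnegative lower bound of the `|λ_i − λ_j|`, which includes the minimum itself. -/
theorem stmt1 (k : ℕ) (hk : 1 ≤ k) (l : Fin (k + 1) → ℝ) (δ : ℝ) (hδ0 : 0 ≤ δ)
    (hδ : ∀ i j : Fin (k + 1), i < j → δ ≤ |l i - l j|)
    (x : EuclideanSpace ℝ (Fin (k + 1))) (hx : ∀ i, 0 ≤ x i) (hsum : ∑ i, x i = 1) :
    δ ^ 2 * (⨅ i : Fin (k + 1), dist x (EuclideanSpace.single i (1 : ℝ))) ^ 2 / 2 ≤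
      ∑ p ∈ Finset.univ.filter (fun p : Fin (k + 1) × Fin (k + 1) => p.1 < p.2),
        x p.1 * x p.2 * (l p.1 - l p.2) ^ 2 := by
  classical
  -- choose a coordinate where x is maximal
  obtain ⟨m, -, hm⟩ := Finset.exists_max_image Finset.univ x ⟨0, Finset.mem_univ 0⟩
  -- sum of squares is at most the maximum coordinate
  have hsq : ∑ i, x i ^ 2 ≤ x m := by
    calc ∑ i, x i ^ 2 ≤ ∑ i, x m * x i := by
          refine Finset.sum_le_sum fun i _ => ?_
          have := hm i (Finset.mem_univ i)
          nlinarith [hx i]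
      _ = x m := by rw [← Finset.mul_sum, hsum, mul_one]
  -- distance to the vertex m, squared
  have hdist : dist x (EuclideanSpace.single m (1 : ℝ)) ^ 2 = ∑ i, x i ^ 2 - 2 * x m + 1 := by
    rw [EuclideanSpace.dist_eq, Real.sq_sqrt (by positivity)]
    have h : ∀ i, dist (x i) (EuclideanSpace.single m (1:ℝ) i) ^ 2
        = x i ^ 2 - 2 * (if i = m then x i else 0) + (if i = m then 1 else 0) := by
      intro i
      rw [EuclideanSpace.single_apply, Real.dist_eq, sq_abs]
      by_cases h : i = m <;> simp [h] <;> ring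
    rw [Finset.sum_congr rfl fun i _ => h i]
    rw [Finset.sum_add_distrib, Finset.sum_sub_distrib, ← Finset.mul_sum,
      Finset.sum_ite_eq' Finset.univ m x, Finset.sum_ite_eq' Finset.univ m (fun _ => (1:ℝ))]
    simp
  -- the pair-sum identity
  have hpair : 2 * ∑ p ∈ Finset.univ.filter
        (fun p : Fin (k+1) × Fin (k+1) => p.1 < p.2), x p.1 * x p.2
      = 1 - ∑ i, x i ^ 2 := by
    have h1 : (∑ p : Fin (k+1) × Fin (k+1), x p.1 * x p.2) = 1 := by
      rw [Fintype.sum_prod_type, ← Finset.sum_mul_sum, hsum, mul_one]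
    have h2 := Finset.sum_filter_add_sum_filter_not Finset.univ
      (fun p : Fin (k+1) × Fin (k+1) => p.1 < p.2) (fun p => x p.1 * x p.2)
    have h3 := Finset.sum_filter_add_sum_filter_not
      (Finset.univ.filter (fun p : Fin (k+1) × Fin (k+1) => ¬ p.1 < p.2))
      (fun p : Fin (k+1) × Fin (k+1) => p.1 = p.2) (fun p => x p.1 * x p.2)
    rw [Finset.filter_filter, Finset.filter_filter] at h3
    have e1 : (Finset.univ.filter fun p : Fin (k+1) × Fin (k+1) => ¬p.1 < p.2 ∧ p.1 = p.2)
        = Finset.univ.filter (fun p => p.1 = p.2) := by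
      apply Finset.filter_congr; rintro ⟨a,b⟩ _
      simp only [Fin.lt_def, Fin.ext_iff, not_lt, iff_and_self]
      omega
    have e2 : (Finset.univ.filter fun p : Fin (k+1) × Fin (k+1) => ¬p.1 < p.2 ∧ ¬p.1 = p.2)
        = Finset.univ.filter (fun p => p.2 < p.1) := by
      apply Finset.filter_congr; rintro ⟨a,b⟩ _
      simp only [Fin.lt_def, Fin.ext_iff, not_lt]
      constructor
      · rintro ⟨h1, h2⟩; omega
      · intro h; omega
    have hd : ∑ p ∈ Finset.univ.filter
          (fun p : Fin (k+1) × Fin (k+1) => p.1 = p.2), x p.1 * x p.2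
        = ∑ i, x i ^ 2 := by
      apply Finset.sum_nbij' (fun p => p.1) (fun i => (i, i)) <;> simp [sq]
    have hs : ∑ p ∈ Finset.univ.filter
          (fun p : Fin (k+1) × Fin (k+1) => p.2 < p.1), x p.1 * x p.2
        = ∑ p ∈ Finset.univ.filter
          (fun p : Fin (k+1) × Fin (k+1) => p.1 < p.2), x p.1 * x p.2 := by
      apply Finset.sum_nbij' (fun p => (p.2, p.1)) (fun p => (p.2, p.1)) <;> simp [mul_comm]
    rw [e1, e2, hd, hs] at h3
    linarith [h1, h2, h3]
  -- the infimum is bounded by the distance to vertex m, and is nonnegative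
  have hbdd : BddBelow (Set.range fun i : Fin (k+1) => dist x (EuclideanSpace.single i (1:ℝ))) :=
    ⟨0, by rintro y ⟨i, rfl⟩; exact dist_nonneg⟩
  have hinf_le : (⨅ i : Fin (k + 1), dist x (EuclideanSpace.single i (1 : ℝ)))
      ≤ dist x (EuclideanSpace.single m (1 : ℝ)) := ciInf_le hbdd m
  have hinf_nonneg : 0 ≤ ⨅ i : Fin (k + 1), dist x (EuclideanSpace.single i (1 : ℝ)) :=
    le_ciInf fun i => dist_nonneg
  have hinf_sq : (⨅ i : Fin (k + 1), dist x (EuclideanSpace.single i (1 : ℝ))) ^ 2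
      ≤ dist x (EuclideanSpace.single m (1 : ℝ)) ^ 2 :=
    pow_le_pow_left₀ hinf_nonneg hinf_le 2
  -- termwise bound on the right-hand side
  have hterm : δ ^ 2 * ∑ p ∈ Finset.univ.filter
        (fun p : Fin (k+1) × Fin (k+1) => p.1 < p.2), x p.1 * x p.2
      ≤ ∑ p ∈ Finset.univ.filter (fun p : Fin (k + 1) × Fin (k + 1) => p.1 < p.2),
        x p.1 * x p.2 * (l p.1 - l p.2) ^ 2 := by
    rw [Finset.mul_sum]
    refine Finset.sum_le_sum fun p hp => ?_
    have hp' : p.1 < p.2 := (Finset.mem_filter.mp hp).2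
    have hδ2 : δ ^ 2 ≤ (l p.1 - l p.2) ^ 2 := by
      have := hδ p.1 p.2 hp'
      calc δ ^ 2 ≤ |l p.1 - l p.2| ^ 2 := pow_le_pow_left₀ hδ0 this 2
        _ = (l p.1 - l p.2) ^ 2 := sq_abs _
    have hxp : 0 ≤ x p.1 * x p.2 := mul_nonneg (hx p.1) (hx p.2)
    nlinarith
  -- put everything together
  have hxm : 0 ≤ x m := hx m
  nlinarith [sq_nonneg δ, hinf_sq, hdist, hpair, hsq, hterm]
end

section
/- Let λ = (λ_0, …, λ_k) ∈ ℝ^{k+1} with the λ_i pairwise distinct, and let X_λ(x) be the vector whose i-th coordinate is λ_i x_i − (∑_j λ_j x_j) x_i. Then for x in the standard k-simplex, X_λ(x) = 0 if and only if x is a vertex of the simplex (i.e., a standard basis vector). -/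
/-- If the `λ_i` are pairwise distinct, then for `x` in the standard
`k`-simplex the vector `X_λ(x)` (with coordinates `λ_i x_i − (∑_j λ_j x_j) x_i`)
vanishes if and only if `x` is a vertex of the simplex (a standard basis vector). -/
theorem stmt3 (k : ℕ) (l : Fin (k + 1) → ℝ) (hl : Function.Injective l)
    (x : Fin (k + 1) → ℝ) (hx : ∀ i, 0 ≤ x i) (hsum : ∑ i, x i = 1) :
    (∀ i, l i * x i - (∑ j, l j * x j) * x i = 0) ↔
      ∃ i : Fin (k + 1), x = fun j => if j = i then (1 : ℝ) else 0 := by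
  constructor
  · intro h
    have hex : ∃ i, x i ≠ 0 := by
      by_contra hc
      push_neg at hc
      simp [hc] at hsum
    obtain ⟨i, hi⟩ := hex
    have key : ∀ j, x j ≠ 0 → l j = (∑ m, l m * x m) := by
      intro j hj
      have h1 := h j
      have h2 : (l j - (∑ m, l m * x m)) * x j = 0 := by ring_nf; ring_nf at h1; linarith
      rcases mul_eq_zero.mp h2 with h3 | h3
      · linarith
      · exact absurd h3 hj
    have hz : ∀ m, m ≠ i → x m = 0 := by
      intro m hm
      by_contra hmz
      exact hm (hl ((key m hmz).trans (key i hi).symm))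
    have hxi : x i = 1 := by
      rw [← hsum]
      exact (Finset.sum_eq_single i (fun m _ hm => hz m hm) (by simp)).symm
    refine ⟨i, funext fun j => ?_⟩
    by_cases hji : j = i
    · subst hji; simp [hxi]
    · simp [hji, hz j hji]
  · rintro ⟨i, rfl⟩
    intro j
    have : (∑ m, l m * if m = i then (1:ℝ) else 0) = l i := by
      rw [Finset.sum_eq_single i (fun m _ hm => by simp [hm]) (by simp)]; simp
    rw [this]
    by_cases hji : j = i <;> simp [hji]
end
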